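/- Let $d > 2$ be an integer and define $h_2(x) = x^2 + x(-d\log x + d - 2) - (d-1)$ for $x \in (1,\infty)$. Then $h_2$ has a unique root on $(1,\infty)$. -/

import Mathlib

theorem stmt_9 (d : ℕ) (hd : 2 < d) :
    ∃! x : ℝ, x ∈ Set.Ioi (1:ℝ) ∧
      x ^ 2 + x * (-(d : ℝ) * Real.log x + d - 2) - ((d : ℝ) - 1) = 0 := by
  have hD : (3:ℝ) ≤ (d:ℝ) := by exact_mod_cast hd
  set D : ℝ := (d:ℝ) with hDdef
  set g : ℝ → ℝ := fun x => x - D * Real.log x + D - 2 - (D - 1) * x⁻¹ with hg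
  set c : ℝ := D - 1 with hc
  have hc2 : (2:ℝ) ≤ c := by simp [hc]; linarith
  -- equivalence
  have key : ∀ x : ℝ, 1 < x →
      (x ^ 2 + x * (-D * Real.log x + D - 2) - (D - 1) = 0 ↔ g x = 0) := by
    intro x hx
    have hx0 : x ≠ 0 := by linarith
    constructor
    · intro h
      have : x * g x = 0 := by
        simp only [hg]; field_simp; nlinarith [h]
      rcases mul_eq_zero.1 this with h1 | h1
      · exact absurd h1 hx0
      · exact h1
    · intro h
      have : x * g x = 0 := by rw [h]; ring
      simp only [hg] at this
      field_simp at this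
      nlinarith [this]
  -- derivative of g
  have hderiv : ∀ x : ℝ, 0 < x → HasDerivAt g ((x - 1) * (x - c) / x ^ 2) x := by
    intro x hx
    have hx0 : x ≠ 0 := ne_of_gt hx
    have h1 : HasDerivAt g (1 - D * x⁻¹ - (D - 1) * (-(x ^ 2)⁻¹)) x := by
      have := ((hasDerivAt_id x).sub ((Real.hasDerivAt_log hx0).const_mul D))
      have h2 := ((this.add_const D).sub_const 2).sub ((hasDerivAt_inv hx0).const_mul (D - 1))
      have h3 : HasDerivAt g _ x := h2
      simpa using h3
    convert h1 using 1
    field_simp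
    ring
  have hcont : ∀ s : Set ℝ, s ⊆ Set.Ioi (0:ℝ) → ContinuousOn g s := by
    intro s hs x hx
    exact ((hderiv x (hs hx)).continuousAt).continuousWithinAt
  -- g 1 = 0
  have hg1 : g 1 = 0 := by simp [hg, hc]; ring
  -- strict anti on [1, c]
  have hanti : StrictAntiOn g (Set.Icc 1 c) := by
    apply strictAntiOn_of_deriv_neg (convex_Icc 1 c)
      (hcont _ (fun x hx => lt_of_lt_of_le one_pos (by exact_mod_cast hx.1) ))
    intro x hx
    rw [interior_Icc] at hx
    have hx1 : 1 < x := hx.1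
    have hxc : x < c := hx.2
    rw [(hderiv x (by linarith)).deriv]
    apply div_neg_of_neg_of_pos
    · nlinarith
    · positivity
  -- strict mono on [c, ∞)
  have hmono : StrictMonoOn g (Set.Ici c) := by
    apply strictMonoOn_of_deriv_pos (convex_Ici c)
      (hcont _ (fun x hx => lt_of_lt_of_le two_pos (le_trans hc2 hx)))
    intro x hx
    rw [interior_Ici] at hx
    have hxc : c < x := hx
    rw [(hderiv x (by linarith)).deriv]
    apply div_pos
    · nlinarith
    · nlinarith
  have hgc : g c < 0 := by
    have := hanti (Set.left_mem_Icc.2 (by linarith)) (Set.right_mem_Icc.2 (by linarith)) (by linarith)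
    rwa [hg1] at this
  -- g (exp D) > 0
  set b : ℝ := Real.exp D with hb
  have hexp : D ^ 2 + D + 1 ≤ b := by
    have h4 := Real.sum_le_exp_of_nonneg (by linarith : (0:ℝ) ≤ D) 4
    have : 1 + D + D^2/2 + D^3/6 ≤ b := by
      simpa [Finset.sum_range_succ, Nat.factorial] using h4
    nlinarith
  have hcb : c < b := by nlinarith
  have hgb : 0 < g b := by
    have hlog : Real.log b = D := Real.log_exp D
    have hbpos : (0:ℝ) < b := Real.exp_pos D
    have hinv : (D - 1) * b⁻¹ ≤ 1 := by
      rw [mul_inv_le_iff₀ hbpos]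
      nlinarith
    simp only [hg, hlog]
    nlinarith
  -- IVT
  obtain ⟨x, hxmem, hxz⟩ := intermediate_value_Icc (le_of_lt hcb)
    (hcont _ (fun y hy => lt_of_lt_of_le two_pos (le_trans hc2 hy.1)))
    (Set.mem_Icc.2 ⟨le_of_lt hgc, le_of_lt hgb⟩)
  have hxc : c < x := by
    rcases lt_or_eq_of_le hxmem.1 with h | h
    · exact h
    · exfalso; rw [← h] at hxz; linarith
  refine ⟨x, ⟨by simp; linarith, (key x (by linarith)).2 hxz⟩, ?_⟩
  rintro y ⟨hy1, hy0⟩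
  have hy1' : 1 < y := hy1
  have hyz : g y = 0 := (key y hy1').1 hy0
  have hyc : c < y := by
    by_contra h
    push_neg at h
    have := hanti (Set.left_mem_Icc.2 (by linarith)) (Set.mem_Icc.2 ⟨le_of_lt hy1', h⟩) hy1'
    rw [hg1, hyz] at this; linarith
  exact hmono.injOn (Set.mem_Ici.2 (le_of_lt hyc)) (Set.mem_Ici.2 (le_of_lt hxc)) (hyz.trans hxz.symm)
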